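/- For every R > 0, all x, x' ∈ [−R, R], and every t > 0, the Dirichlet heat kernel is nonnegative: f₁(x, t; x') ≥ 0. (This is needed for f₁ to be the transition probability density of a Brownian motion killed at the endpoints ±R.) -/

import Mathlib

open Real Filter Topology MeasureTheory

/-- Dirichlet heat kernel of the interval `(-R, R)` with source `x'`. -/
noncomputable def f₁ (R x' x t : ℝ) : ℝ :=
  ∑' k : ℕ, (1 / R) * Real.sin (((k : ℝ) + 1) * π * (x' + R) / (2 * R)) *
    Real.sin (((k : ℝ) + 1) * π * (x + R) / (2 * R)) *
    Real.exp (-((((k : ℝ) + 1) * π) ^ 2 / (4 * R ^ 2)) * t / 2)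


-- telescoping cosine sum
lemma cos_telescope (M : ℕ) (φ : ℝ) (hφ : Real.sin φ ≠ 0) :
    ∑ k ∈ Finset.range M, Real.cos ((2 * (k:ℝ) + 2) * φ)
      = (Real.sin ((2 * (M:ℝ) + 1) * φ) - Real.sin φ) / (2 * Real.sin φ) := by
  rw [eq_div_iff (mul_ne_zero two_ne_zero hφ)]
  have key : ∀ k : ℕ, Real.cos ((2 * (k:ℝ) + 2) * φ) * (2 * Real.sin φ)
      = Real.sin ((2 * ((k:ℝ) + 1) + 1) * φ) - Real.sin ((2 * (k:ℝ) + 1) * φ) := by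
    intro k
    have h1 : (2 * ((k:ℝ) + 1) + 1) * φ = (2 * (k:ℝ) + 2) * φ + φ := by ring
    have h2 : (2 * (k:ℝ) + 1) * φ = (2 * (k:ℝ) + 2) * φ - φ := by ring
    rw [h1, h2, Real.sin_add, Real.sin_sub]
    ring
  rw [Finset.sum_mul]
  calc ∑ k ∈ Finset.range M, Real.cos ((2 * (k:ℝ) + 2) * φ) * (2 * Real.sin φ)
      = ∑ k ∈ Finset.range M, (Real.sin ((2 * ((k:ℝ) + 1) + 1) * φ) - Real.sin ((2 * (k:ℝ) + 1) * φ)) := by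
        exact Finset.sum_congr rfl fun k _ => key k
    _ = Real.sin ((2 * (M:ℝ) + 1) * φ) - Real.sin ((2 * (0:ℝ) + 1) * φ) := by
        have := Finset.sum_range_sub (fun k : ℕ => Real.sin ((2 * (k:ℝ) + 1) * φ)) M
        simpa using this
    _ = Real.sin ((2 * (M:ℝ) + 1) * φ) - Real.sin φ := by norm_num

-- the key cosine sum: for 1 ≤ m ≤ 2N+1 and α = π/(N+1),
-- ∑_{k=1}^{N} cos(k m α) = -(1+(-1)^m)/2
lemma cos_sum (N m : ℕ) (hm1 : 1 ≤ m) (hm2 : m ≤ 2 * N + 1) :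
    ∑ k ∈ Finset.range N, Real.cos (((k:ℝ) + 1) * m * (π / ((N:ℝ) + 1)))
      = -(1 + (-1 : ℝ) ^ m) / 2 := by
  set α : ℝ := π / ((N:ℝ) + 1) with hα
  set φ : ℝ := m * α / 2 with hφdef
  have hN1 : (0:ℝ) < (N:ℝ) + 1 := by positivity
  have hφpos : 0 < φ := by
    have : (0:ℝ) < (m:ℝ) := by exact_mod_cast hm1
    have hαpos : 0 < α := by rw [hα]; positivity
    rw [hφdef]; positivity
  have hφlt : φ < π := by
    have hm2' : (m:ℝ) ≤ 2 * N + 1 := by exact_mod_cast hm2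
    have hrw : φ = (m:ℝ) * π / (2 * ((N:ℝ) + 1)) := by rw [hφdef, hα]; field_simp
    rw [hrw, div_lt_iff₀ (by positivity)]
    have hπ := Real.pi_pos
    nlinarith
  have hsinφ : 0 < Real.sin φ := Real.sin_pos_of_pos_of_lt_pi hφpos hφlt
  have harg : ∀ k : ℕ, ((k:ℝ) + 1) * m * α = (2 * (k:ℝ) + 2) * φ := by
    intro k; rw [hφdef]; ring
  have h2N1 : (2 * (N:ℝ) + 1) * φ = m * π - φ := by
    rw [hφdef, hα]
    field_simp
    ring
  calc ∑ k ∈ Finset.range N, Real.cos (((k:ℝ) + 1) * m * α)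
      = ∑ k ∈ Finset.range N, Real.cos ((2 * (k:ℝ) + 2) * φ) := by
        exact Finset.sum_congr rfl fun k _ => by rw [harg k]
    _ = (Real.sin ((2 * (N:ℝ) + 1) * φ) - Real.sin φ) / (2 * Real.sin φ) :=
        cos_telescope N φ hsinφ.ne'
    _ = -(1 + (-1 : ℝ) ^ m) / 2 := by
        rw [h2N1, Real.sin_nat_mul_pi_sub]
        field_simp
        ring

lemma prod_to_sum (A B : ℝ) :
    Real.sin A * Real.sin B = (Real.cos (A - B) - Real.cos (A + B)) / 2 := by
  rw [Real.cos_sub_cos]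
  have h1 : (A - B + (A + B)) / 2 = A := by ring
  have h2 : (A - B - (A + B)) / 2 = -B := by ring
  rw [h1, h2, Real.sin_neg]
  ring

lemma sin_orth (N : ℕ) (i j : Fin N) :
    ∑ k : Fin N, Real.sin (((i:ℝ) + 1) * ((k:ℝ) + 1) * (π / ((N:ℝ) + 1)))
      * Real.sin (((j:ℝ) + 1) * ((k:ℝ) + 1) * (π / ((N:ℝ) + 1)))
      = if i = j then ((N:ℝ) + 1) / 2 else 0 := by
  set α : ℝ := π / ((N:ℝ) + 1) with hα
  have hkey : ∀ k : Fin N,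
      Real.sin (((i:ℝ) + 1) * ((k:ℝ) + 1) * α) * Real.sin (((j:ℝ) + 1) * ((k:ℝ) + 1) * α)
      = (Real.cos (((k:ℝ) + 1) * (((i:ℝ) - (j:ℝ))) * α)
          - Real.cos (((k:ℝ) + 1) * (((i:ℝ) + (j:ℝ) + 2)) * α)) / 2 := by
    intro k
    rw [prod_to_sum]
    congr 2
    · ring
    · ring
  rw [Finset.sum_congr rfl fun k _ => hkey k]
  rcases eq_or_ne i j with hij | hij
  · subst hij
    simp only [if_pos rfl, sub_self]
    have h0 : ∀ k : Fin N, Real.cos (((k:ℝ) + 1) * ((i:ℝ) - (i:ℝ)) * α) = 1 := by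
      intro k; rw [sub_self, mul_zero, zero_mul, Real.cos_zero]
    have hsum2 : ∑ k : Fin N, Real.cos (((k:ℝ) + 1) * (((i:ℝ) + (i:ℝ) + 2)) * α)
        = -(1 + (-1 : ℝ) ^ (2 * ((i:ℕ) + 1))) / 2 := by
      have hcast : ((i:ℝ) + (i:ℝ) + 2) = ((2 * ((i:ℕ) + 1) : ℕ) : ℝ) := by push_cast; ring
      rw [Fin.sum_univ_eq_sum_range
        (fun k => Real.cos (((k:ℝ) + 1) * (((i:ℝ) + (i:ℝ) + 2)) * α))]
      rw [hα]
      rw [Finset.sum_congr rfl fun k _ => by rw [hcast]]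
      exact cos_sum N (2 * ((i:ℕ) + 1)) (by omega) (by omega)
    have hpow : (-1 : ℝ) ^ (2 * ((i:ℕ) + 1)) = 1 := by
      rw [pow_mul]; norm_num
    simp only [mul_zero, zero_mul, Real.cos_zero, if_true]
    rw [← Finset.sum_div, Finset.sum_sub_distrib, Finset.sum_const, Finset.card_univ,
      Fintype.card_fin, hsum2, hpow]
    push_cast
    ring
  · rw [if_neg hij]
    set u := (i:ℕ); set v := (j:ℕ)
    have huv : u ≠ v := fun h => hij (Fin.ext h)
    set d := max u v - min u v with hd
    have hd1 : 1 ≤ d := by omega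
    have hdN : d ≤ 2 * N + 1 := by have := i.isLt; have := j.isLt; omega
    have hdiff : ((i:ℝ) - (j:ℝ)) = (d:ℝ) ∨ ((i:ℝ) - (j:ℝ)) = -(d:ℝ) := by
      rcases le_or_gt u v with h | h
      · right
        have : d = v - u := by omega
        rw [this]
        have : (v:ℝ) - (u:ℝ) = ((v - u : ℕ) : ℝ) := by
          push_cast [Nat.cast_sub (by omega : u ≤ v)]; ring
        rw [← this]; change (u:ℝ) - (v:ℝ) = _; ring
      · left
        have : d = u - v := by omega
        rw [this]
        push_cast [Nat.cast_sub (by omega : v ≤ u)]; ring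
    have hcos1 : ∀ k : Fin N, Real.cos (((k:ℝ) + 1) * ((i:ℝ) - (j:ℝ)) * α)
        = Real.cos (((k:ℝ) + 1) * (d:ℝ) * α) := by
      intro k
      rcases hdiff with h | h
      · rw [h]
      · rw [h, show ((k:ℝ) + 1) * (-(d:ℝ)) * α = -(((k:ℝ) + 1) * (d:ℝ) * α) by ring,
          Real.cos_neg]
    have hsum1 : ∑ k : Fin N, Real.cos (((k:ℝ) + 1) * (d:ℝ) * α)
        = -(1 + (-1 : ℝ) ^ d) / 2 := by
      rw [Fin.sum_univ_eq_sum_range (fun k => Real.cos (((k:ℝ) + 1) * (d:ℝ) * α)), hα]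
      exact cos_sum N d hd1 hdN
    have hsum2 : ∑ k : Fin N, Real.cos (((k:ℝ) + 1) * ((i:ℝ) + (j:ℝ) + 2) * α)
        = -(1 + (-1 : ℝ) ^ (u + v + 2)) / 2 := by
      have hcast : ((i:ℝ) + (j:ℝ) + 2) = ((u + v + 2 : ℕ) : ℝ) := by push_cast; ring
      rw [Fin.sum_univ_eq_sum_range
        (fun k => Real.cos (((k:ℝ) + 1) * ((i:ℝ) + (j:ℝ) + 2) * α)), hα]
      rw [Finset.sum_congr rfl fun k _ => by rw [hcast]]
      exact cos_sum N (u + v + 2) (by omega) (by have := i.isLt; have := j.isLt; omega)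
    have hpar : (-1 : ℝ) ^ (u + v + 2) = (-1 : ℝ) ^ d := by
      have h2 : u + v + 2 = d + 2 * (min u v + 1) := by omega
      rw [h2, pow_add, pow_mul]
      norm_num
    rw [Finset.sum_congr rfl fun k _ => by rw [hcos1 k]]
    rw [← Finset.sum_div, Finset.sum_sub_distrib, hsum1, hsum2, hpar]
    ring

open Matrix in
noncomputable def Smat (N : ℕ) : Matrix (Fin N) (Fin N) ℝ :=
  Matrix.of fun i j => Real.sin (((i:ℝ) + 1) * ((j:ℝ) + 1) * (π / ((N:ℝ) + 1)))

open Matrix in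
noncomputable def Tmat (N : ℕ) : Matrix (Fin N) (Fin N) ℝ :=
  Matrix.of fun i j => (if (i:ℕ) + 1 = (j:ℕ) then (1:ℝ) else 0)
    + (if (j:ℕ) + 1 = (i:ℕ) then (1:ℝ) else 0)

lemma Smat_mul_Smat (N : ℕ) : Smat N * Smat N = (((N:ℝ) + 1) / 2) • 1 := by
  ext i j
  rw [Matrix.mul_apply]
  have : ∀ k : Fin N, Smat N i k * Smat N k j
      = Real.sin (((i:ℝ) + 1) * ((k:ℝ) + 1) * (π / ((N:ℝ) + 1)))
        * Real.sin (((j:ℝ) + 1) * ((k:ℝ) + 1) * (π / ((N:ℝ) + 1))) := by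
    intro k
    simp only [Smat, Matrix.of_apply]
    rw [show ((k:ℝ) + 1) * ((j:ℝ) + 1) * (π / ((N:ℝ) + 1))
        = ((j:ℝ) + 1) * ((k:ℝ) + 1) * (π / ((N:ℝ) + 1)) by ring]
  rw [Finset.sum_congr rfl fun k _ => this k, sin_orth N i j]
  by_cases hij : i = j
  · subst hij; simp [Matrix.one_apply]
  · simp [Matrix.one_apply, hij]

lemma sin_three_term (n : ℕ) (β : ℝ) :
    Real.sin ((n:ℝ) * β) + Real.sin (((n:ℝ) + 2) * β)
      = 2 * Real.cos β * Real.sin (((n:ℝ) + 1) * β) := by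
  have h1 : (n:ℝ) * β = ((n:ℝ) + 1) * β - β := by ring
  have h2 : ((n:ℝ) + 2) * β = ((n:ℝ) + 1) * β + β := by ring
  rw [h1, h2, Real.sin_add, Real.sin_sub]
  ring

lemma Tmat_mul_Smat (N : ℕ) : Tmat N * Smat N
    = Smat N * Matrix.diagonal (fun k : Fin N => 2 * Real.cos (((k:ℝ) + 1) * (π / ((N:ℝ) + 1)))) := by
  ext i k
  set α : ℝ := π / ((N:ℝ) + 1) with hα
  set β : ℝ := ((k:ℝ) + 1) * α with hβ
  have hNα : ((N:ℝ) + 1) * α = π := by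
    rw [hα]; field_simp
  rw [Matrix.mul_apply, Matrix.mul_diagonal]
  have hsplit : ∀ j : Fin N, Tmat N i j * Smat N j k
      = (if (i:ℕ) + 1 = (j:ℕ) then Smat N j k else 0)
        + (if (j:ℕ) + 1 = (i:ℕ) then Smat N j k else 0) := by
    intro j
    simp only [Tmat, Matrix.of_apply]
    split_ifs <;> ring
  rw [Finset.sum_congr rfl fun j _ => hsplit j, Finset.sum_add_distrib]
  have hs : ∀ j : Fin N, Smat N j k = Real.sin (((j:ℝ) + 1) * β) := by
    intro j; simp only [Smat, Matrix.of_apply, hβ, hα]; ring_nf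
  -- first sum: the j with j = i+1, if it exists
  have hsum1 : (∑ j : Fin N, if (i:ℕ) + 1 = (j:ℕ) then Smat N j k else 0)
      = Real.sin (((i:ℝ) + 2) * β) := by
    by_cases h : (i:ℕ) + 1 < N
    · rw [Finset.sum_eq_single (⟨(i:ℕ) + 1, h⟩ : Fin N)]
      · rw [if_pos rfl, hs]
        push_cast
        ring_nf
      · intro j _ hj
        rw [if_neg]
        intro hc
        exact hj (by ext; simp; omega)
      · intro hmem; exact absurd (Finset.mem_univ _) hmem
    · have hiN : (i:ℕ) + 1 = N := by have := i.isLt; omega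
      have hzero : Real.sin (((i:ℝ) + 2) * β) = 0 := by
        have : ((i:ℝ) + 2) * β = ((k:ℕ) + 1 : ℕ) * π := by
          rw [hβ]
          have : ((i:ℝ) + 2) = (N:ℝ) + 1 := by
            have : ((i:ℕ):ℝ) + 1 = (N:ℝ) := by exact_mod_cast congrArg (Nat.cast : ℕ → ℝ) hiN
            linarith
          rw [this]
          push_cast
          nlinarith [hNα]
        rw [this, Real.sin_nat_mul_pi]
      rw [hzero]
      apply Finset.sum_eq_zero
      intro j _
      rw [if_neg]
      intro hc
      have := j.isLt; omega
  -- second sum: the j with j = i-1, if it exists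
  have hsum2 : (∑ j : Fin N, if (j:ℕ) + 1 = (i:ℕ) then Smat N j k else 0)
      = Real.sin ((i:ℝ) * β) := by
    by_cases h : 1 ≤ (i:ℕ)
    · have hlt : (i:ℕ) - 1 < N := by have := i.isLt; omega
      rw [Finset.sum_eq_single (⟨(i:ℕ) - 1, hlt⟩ : Fin N)]
      · rw [if_pos (by simp; omega), hs]
        have : (((i:ℕ) - 1 : ℕ) : ℝ) + 1 = (i:ℝ) := by
          have : ((i:ℕ) - 1) + 1 = (i:ℕ) := by omega
          exact_mod_cast congrArg (Nat.cast : ℕ → ℝ) this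
        rw [this]
      · intro j _ hj
        rw [if_neg]
        intro hc
        exact hj (by ext; simp; omega)
      · intro hmem; exact absurd (Finset.mem_univ _) hmem
    · have hi0 : (i:ℕ) = 0 := by omega
      have hzero : Real.sin ((i:ℝ) * β) = 0 := by
        rw [show (i:ℝ) = 0 by exact_mod_cast congrArg (Nat.cast : ℕ → ℝ) hi0]
        simp
      rw [hzero]
      apply Finset.sum_eq_zero
      intro j _
      rw [if_neg]
      omega
  rw [hsum1, hsum2]
  have := sin_three_term (i:ℕ) β
  have hSik : Smat N i k = Real.sin (((i:ℝ) + 1) * β) := hs i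
  rw [hSik]
  linarith [sin_three_term (i:ℕ) β]


open NormedSpace in
lemma exp_entry_nonneg {N : ℕ} (B : Matrix (Fin N) (Fin N) ℝ)
    (hB : ∀ i j, 0 ≤ B i j) (i j : Fin N) : 0 ≤ NormedSpace.exp B i j := by
  letI : SeminormedRing (Matrix (Fin N) (Fin N) ℝ) := Matrix.linftyOpSemiNormedRing
  letI : NormedRing (Matrix (Fin N) (Fin N) ℝ) := Matrix.linftyOpNormedRing
  letI : NormedAlgebra ℝ (Matrix (Fin N) (Fin N) ℝ) := Matrix.linftyOpNormedAlgebra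
  have hpow : ∀ n : ℕ, ∀ a b : Fin N, 0 ≤ (B ^ n) a b := by
    intro n
    induction n with
    | zero => intro a b; simp [Matrix.one_apply]; positivity
    | succ n ih =>
      intro a b
      rw [pow_succ, Matrix.mul_apply]
      exact Finset.sum_nonneg fun k _ => mul_nonneg (ih a k) (hB k b)
  have he : NormedSpace.exp B = ∑' n : ℕ, ((Nat.factorial n : ℝ)⁻¹) • B ^ n := by
    rw [NormedSpace.exp_eq_tsum ℝ]
  let e : Matrix (Fin N) (Fin N) ℝ →ₗ[ℝ] ℝ :=
    { toFun := fun M => M i j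
      map_add' := fun _ _ => rfl
      map_smul' := fun _ _ => rfl }
  have hcont : Continuous e := e.continuous_of_finiteDimensional
  let eL : Matrix (Fin N) (Fin N) ℝ →L[ℝ] ℝ := ⟨e, hcont⟩
  have hsummable : Summable fun n : ℕ => ((Nat.factorial n : ℝ)⁻¹) • B ^ n :=
    NormedSpace.expSeries_summable' (𝕂 := ℝ) B
  have : NormedSpace.exp B i j = eL (∑' n : ℕ, ((Nat.factorial n : ℝ)⁻¹) • B ^ n) := by
    rw [← he]; rfl
  rw [this, eL.map_tsum hsummable]
  apply tsum_nonneg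
  intro n
  have : eL (((Nat.factorial n : ℝ)⁻¹) • B ^ n) = ((Nat.factorial n : ℝ)⁻¹) * (B ^ n) i j := rfl
  rw [this]
  exact mul_nonneg (by positivity) (hpow n i j)

lemma discrete_nonneg (N : ℕ) (τ c : ℝ) (hτ : 0 ≤ τ) (i j : Fin N) :
    0 ≤ ∑ k : Fin N,
      Real.sin (((i:ℝ) + 1) * ((k:ℝ) + 1) * (π / ((N:ℝ) + 1)))
        * Real.sin (((j:ℝ) + 1) * ((k:ℝ) + 1) * (π / ((N:ℝ) + 1)))
        * Real.exp (c + τ * (2 * Real.cos (((k:ℝ) + 1) * (π / ((N:ℝ) + 1))))) := by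
  set S := Smat N with hS
  set T := Tmat N with hT
  set A : Matrix (Fin N) (Fin N) ℝ := c • (1 : Matrix (Fin N) (Fin N) ℝ) + τ • T with hA
  set v : Fin N → ℝ := fun k => c + τ * (2 * Real.cos (((k:ℝ) + 1) * (π / ((N:ℝ) + 1)))) with hv
  have hN1 : (0:ℝ) < (N:ℝ) + 1 := by positivity
  -- Step 1 : entries of exp A are nonnegative
  have hTnonneg : ∀ a b : Fin N, 0 ≤ (τ • T) a b := by
    intro a b
    simp only [Matrix.smul_apply, hT, Tmat, Matrix.of_apply, smul_eq_mul]
    have : (0:ℝ) ≤ (if (a:ℕ) + 1 = (b:ℕ) then (1:ℝ) else 0)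
        + (if (b:ℕ) + 1 = (a:ℕ) then (1:ℝ) else 0) := by positivity
    exact mul_nonneg hτ this
  have hcomm : Commute (c • (1 : Matrix (Fin N) (Fin N) ℝ)) (τ • T) :=
    ((Commute.one_left T).smul_left c).smul_right τ
  have hsplit : NormedSpace.exp A
      = NormedSpace.exp (c • (1 : Matrix (Fin N) (Fin N) ℝ)) * NormedSpace.exp (τ • T) :=
    Matrix.exp_add_of_commute _ _ hcomm
  have hc1 : (c • (1 : Matrix (Fin N) (Fin N) ℝ)) = Matrix.diagonal (fun _ => c) := by
    ext a b
    rcases eq_or_ne a b with h | h <;>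
      simp [Matrix.one_apply, Matrix.diagonal_apply, h]
  have hexpc : NormedSpace.exp (c • (1 : Matrix (Fin N) (Fin N) ℝ))
      = Real.exp c • (1 : Matrix (Fin N) (Fin N) ℝ) := by
    rw [hc1, Matrix.exp_diagonal]
    rw [show NormedSpace.exp (fun _ : Fin N => c) = fun _ : Fin N => Real.exp c by
      rw [Pi.exp_def]; funext _; rw [Real.exp_eq_exp_ℝ]]
    ext a b
    rcases eq_or_ne a b with h | h <;>
      simp [Matrix.one_apply, Matrix.diagonal_apply, h]
  have hexpA_nonneg : 0 ≤ NormedSpace.exp A i j := by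
    rw [hsplit, hexpc]
    have : (Real.exp c • (1 : Matrix (Fin N) (Fin N) ℝ)) * NormedSpace.exp (τ • T)
        = Real.exp c • NormedSpace.exp (τ • T) := by
      rw [Matrix.smul_mul, Matrix.one_mul]
    rw [this, Matrix.smul_apply, smul_eq_mul]
    exact mul_nonneg (Real.exp_nonneg c) (exp_entry_nonneg _ hTnonneg i j)
  -- Step 2 : diagonalize
  have hSS : S * ((2 / ((N:ℝ) + 1)) • S) = 1 := by
    rw [Matrix.mul_smul, Smat_mul_Smat, smul_smul,
      show (2 / ((N:ℝ) + 1)) * (((N:ℝ) + 1) / 2) = 1 by field_simp, one_smul]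
  have hdet : IsUnit S.det := Matrix.isUnit_det_of_right_inverse hSS
  have hunit : IsUnit S := (Matrix.isUnit_iff_isUnit_det S).mpr hdet
  have hSinv : S⁻¹ = (2 / ((N:ℝ) + 1)) • S := Matrix.inv_eq_right_inv hSS
  have hAS : A * S = S * Matrix.diagonal v := by
    have hvsplit : Matrix.diagonal v
        = (c • (1 : Matrix (Fin N) (Fin N) ℝ))
          + τ • Matrix.diagonal
              (fun k : Fin N => 2 * Real.cos (((k:ℝ) + 1) * (π / ((N:ℝ) + 1)))) := by
      rw [hc1]
      ext a b
      rcases eq_or_ne a b with h | h <;>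
        simp [Matrix.diagonal_apply, h, hv]
    rw [hA, Matrix.add_mul, Matrix.smul_mul, Matrix.one_mul, Matrix.smul_mul, Tmat_mul_Smat,
      hvsplit, Matrix.mul_add, Matrix.mul_smul, Matrix.mul_smul, Matrix.mul_one]
  have hAconj : A = S * Matrix.diagonal v * S⁻¹ := by
    calc A = A * (S * S⁻¹) := by rw [Matrix.mul_nonsing_inv S hdet, Matrix.mul_one]
    _ = (A * S) * S⁻¹ := by rw [Matrix.mul_assoc]
    _ = S * Matrix.diagonal v * S⁻¹ := by rw [hAS]
  have hexpA : NormedSpace.exp A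
      = S * Matrix.diagonal (fun k => Real.exp (v k)) * S⁻¹ := by
    rw [hAconj, Matrix.exp_conj S _ hunit, Matrix.exp_diagonal]
    congr 2
    rw [Pi.exp_def]; funext k; rw [Real.exp_eq_exp_ℝ]
  have hentry : NormedSpace.exp A i j
      = ∑ k : Fin N, S i k * (Real.exp (v k) * ((2 / ((N:ℝ) + 1)) * S k j)) := by
    rw [hexpA, hSinv, Matrix.mul_assoc, Matrix.mul_apply]
    apply Finset.sum_congr rfl
    intro k _
    rw [Matrix.diagonal_mul, Matrix.smul_apply, smul_eq_mul]
  have hterm : ∀ k : Fin N,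
      Real.sin (((i:ℝ) + 1) * ((k:ℝ) + 1) * (π / ((N:ℝ) + 1)))
        * Real.sin (((j:ℝ) + 1) * ((k:ℝ) + 1) * (π / ((N:ℝ) + 1)))
        * Real.exp (v k)
      = (((N:ℝ) + 1) / 2) * (S i k * (Real.exp (v k) * ((2 / ((N:ℝ) + 1)) * S k j))) := by
    intro k
    have harg : ((k:ℝ) + 1) * ((j:ℝ) + 1) * (π / ((N:ℝ) + 1))
        = ((j:ℝ) + 1) * ((k:ℝ) + 1) * (π / ((N:ℝ) + 1)) := by ring
    simp only [hS, Smat, Matrix.of_apply]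
    rw [harg]
    field_simp
  calc (0:ℝ) ≤ (((N:ℝ) + 1) / 2) * NormedSpace.exp A i j :=
        mul_nonneg (by positivity) hexpA_nonneg
  _ = ∑ k : Fin N, Real.sin (((i:ℝ) + 1) * ((k:ℝ) + 1) * (π / ((N:ℝ) + 1)))
        * Real.sin (((j:ℝ) + 1) * ((k:ℝ) + 1) * (π / ((N:ℝ) + 1)))
        * Real.exp (v k) := by
      rw [hentry, Finset.mul_sum]
      exact Finset.sum_congr rfl fun k _ => (hterm k).symm


noncomputable def hkIdx (a : ℝ) (N : ℕ) : ℕ := min (N - 1) ⌊a * N⌋₊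

lemma hkIdx_lt {a : ℝ} {N : ℕ} (hN : 1 ≤ N) : hkIdx a N < N := by
  unfold hkIdx; omega

lemma hkIdx_tendsto (a : ℝ) (ha0 : 0 ≤ a) (ha1 : a ≤ 1) :
    Tendsto (fun N : ℕ => (((hkIdx a N : ℕ) : ℝ) + 1) / ((N:ℝ) + 1)) atTop (𝓝 a) := by
  have hest : ∀ N : ℕ, 1 ≤ N → |(((hkIdx a N : ℕ) : ℝ) + 1) / ((N:ℝ) + 1) - a| ≤ 2 / ((N:ℝ) + 1) := by
    intro N hN
    have hN1 : (0:ℝ) < (N:ℝ) + 1 := by positivity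
    rw [show (((hkIdx a N : ℕ) : ℝ) + 1) / ((N:ℝ) + 1) - a
        = ((((hkIdx a N : ℕ) : ℝ) + 1) - a * ((N:ℝ) + 1)) / ((N:ℝ) + 1) by field_simp]
    rw [abs_div, abs_of_pos hN1, div_le_div_iff_of_pos_right hN1]
    have hfl : (⌊a * N⌋₊ : ℝ) ≤ a * N := Nat.floor_le (by positivity)
    have hfl2 : a * N < (⌊a * N⌋₊ : ℝ) + 1 := Nat.lt_floor_add_one _
    rcases le_or_gt (⌊a * N⌋₊) (N - 1) with h | h
    · have : hkIdx a N = ⌊a * N⌋₊ := by unfold hkIdx; omega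
      rw [this, abs_le]
      have hexp : a * ((N:ℝ) + 1) = a * N + a := by ring
      constructor <;> linarith
    · have hval : hkIdx a N = N - 1 := by unfold hkIdx; omega
      have hcast : ((hkIdx a N : ℕ) : ℝ) = (N:ℝ) - 1 := by
        rw [hval]; push_cast [Nat.cast_sub hN]; ring
      have hge : (N:ℝ) ≤ a * N := by
        have : (N:ℝ) ≤ (⌊a * N⌋₊ : ℝ) := by exact_mod_cast Nat.le_of_lt_succ (by omega)
        linarith
      rw [hcast, abs_le]
      have hexp : a * ((N:ℝ) + 1) = a * N + a := by ring
      have haN : a * (N:ℝ) ≤ (N:ℝ) := by nlinarith [Nat.cast_nonneg (α := ℝ) N]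
      constructor <;> linarith
  have h2 : Tendsto (fun N : ℕ => 2 / ((N:ℝ) + 1)) atTop (𝓝 0) :=
    tendsto_const_nhds.div_atTop
      (tendsto_atTop_add_const_right _ 1 tendsto_natCast_atTop_atTop)
  rw [tendsto_iff_dist_tendsto_zero]
  apply squeeze_zero (fun N => dist_nonneg)
    (g := fun N : ℕ => if 1 ≤ N then 2 / ((N:ℝ) + 1) else 2)
  · intro N
    by_cases hN : 1 ≤ N
    · rw [if_pos hN, Real.dist_eq]; exact hest N hN
    · interval_cases N
      have h0 : hkIdx a 0 = 0 := by unfold hkIdx; simp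
      rw [if_neg (by omega), Real.dist_eq, h0]
      norm_num
      rw [abs_le]; constructor <;> linarith
  · apply Tendsto.congr' _ h2
    filter_upwards [eventually_ge_atTop 1] with N hN
    rw [if_pos hN]

lemma sin_factor_tendsto (a : ℝ) (ha0 : 0 ≤ a) (ha1 : a ≤ 1) (k : ℕ) :
    Tendsto (fun N : ℕ => Real.sin ((((hkIdx a N : ℕ) : ℝ) + 1) * ((k:ℝ) + 1) * (π / ((N:ℝ) + 1))))
      atTop (𝓝 (Real.sin (((k:ℝ) + 1) * π * a))) := by
  have harg : ∀ N : ℕ, (((hkIdx a N : ℕ) : ℝ) + 1) * ((k:ℝ) + 1) * (π / ((N:ℝ) + 1))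
      = ((k:ℝ) + 1) * π * ((((hkIdx a N : ℕ) : ℝ) + 1) / ((N:ℝ) + 1)) := by
    intro N; field_simp
  simp only [harg]
  exact (Real.continuous_sin.tendsto _).comp ((hkIdx_tendsto a ha0 ha1).const_mul _)

lemma sin_div_tendsto_one :
    Tendsto (fun y : ℝ => Real.sin y / y) (𝓝[≠] (0:ℝ)) (𝓝 1) := by
  have h := hasDerivAt_iff_tendsto_slope.mp (Real.hasDerivAt_sin 0)
  rw [Real.cos_zero] at h
  apply h.congr'
  filter_upwards with y
  simp [slope_def_field]

lemma exp_arg_tendsto (R t : ℝ) (hR : 0 < R) (k : ℕ) :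
    Tendsto (fun N : ℕ => -2 * (t * ((N:ℝ) + 1) ^ 2 / (8 * R ^ 2))
        + t * ((N:ℝ) + 1) ^ 2 / (8 * R ^ 2) * (2 * Real.cos (((k:ℝ) + 1) * (π / ((N:ℝ) + 1)))))
      atTop (𝓝 (-((((k:ℝ) + 1) * π) ^ 2 / (4 * R ^ 2)) * t / 2)) := by
  set θ : ℕ → ℝ := fun N => ((k:ℝ) + 1) * π / (2 * ((N:ℝ) + 1)) with hθdef
  have hθpos : ∀ N : ℕ, 0 < θ N := by
    intro N
    have := Real.pi_pos
    have : (0:ℝ) < (N:ℝ) + 1 := by positivity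
    rw [hθdef]
    positivity
  have hid : ∀ N : ℕ, -2 * (t * ((N:ℝ) + 1) ^ 2 / (8 * R ^ 2))
      + t * ((N:ℝ) + 1) ^ 2 / (8 * R ^ 2) * (2 * Real.cos (((k:ℝ) + 1) * (π / ((N:ℝ) + 1))))
      = -(t / (2 * R ^ 2)) * (((k:ℝ) + 1) * π / 2 * (Real.sin (θ N) / θ N)) ^ 2 := by
    intro N
    have hN1 : ((N:ℝ) + 1) ≠ 0 := by positivity
    have hcos : Real.cos (((k:ℝ) + 1) * (π / ((N:ℝ) + 1))) = 1 - 2 * Real.sin (θ N) ^ 2 := by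
      have h2θ : ((k:ℝ) + 1) * (π / ((N:ℝ) + 1)) = 2 * θ N := by
        rw [hθdef]; field_simp
      rw [h2θ]
      have := Real.sin_sq_eq_half_sub (θ N)
      linarith
    rw [hcos]
    have hθN : θ N ≠ 0 := (hθpos N).ne'
    have hsin : ((k:ℝ) + 1) * π / 2 * (Real.sin (θ N) / θ N) = ((N:ℝ) + 1) * Real.sin (θ N) := by
      rw [hθdef]
      field_simp
    rw [hsin]
    field_simp
    ring
  simp only [hid]
  have hθ0 : Tendsto θ atTop (𝓝[≠] (0:ℝ)) := by
    apply tendsto_nhdsWithin_of_tendsto_nhds_of_eventually_within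
    · have h1 : Tendsto (fun N : ℕ => ((N:ℝ) + 1)) atTop atTop :=
        tendsto_atTop_add_const_right _ 1 tendsto_natCast_atTop_atTop
      have hden : Tendsto (fun N : ℕ => 2 * ((N:ℝ) + 1)) atTop atTop :=
        Tendsto.const_mul_atTop two_pos h1
      exact tendsto_const_nhds.div_atTop hden
    · filter_upwards with N using (hθpos N).ne'
  have hratio : Tendsto (fun N : ℕ => Real.sin (θ N) / θ N) atTop (𝓝 1) :=
    sin_div_tendsto_one.comp hθ0
  have hmain : Tendsto (fun N : ℕ => -(t / (2 * R ^ 2)) * (((k:ℝ) + 1) * π / 2 * (Real.sin (θ N) / θ N)) ^ 2)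
      atTop (𝓝 (-(t / (2 * R ^ 2)) * (((k:ℝ) + 1) * π / 2 * 1) ^ 2)) :=
    ((hratio.const_mul _).pow 2).const_mul _
  convert hmain using 2
  field_simp
  ring

noncomputable def hkF (R t a b : ℝ) (N k : ℕ) : ℝ :=
  if k < N then
    1 / R * Real.sin ((((hkIdx b N : ℕ) : ℝ) + 1) * ((k:ℝ) + 1) * (π / ((N:ℝ) + 1)))
      * Real.sin ((((hkIdx a N : ℕ) : ℝ) + 1) * ((k:ℝ) + 1) * (π / ((N:ℝ) + 1)))
      * Real.exp (-2 * (t * ((N:ℝ) + 1) ^ 2 / (8 * R ^ 2))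
          + t * ((N:ℝ) + 1) ^ 2 / (8 * R ^ 2)
            * (2 * Real.cos (((k:ℝ) + 1) * (π / ((N:ℝ) + 1)))))
  else 0

lemma hkF_bound (R t a b : ℝ) (hR : 0 < R) (ht : 0 < t) (N k : ℕ) :
    ‖hkF R t a b N k‖ ≤ 1 / R * Real.exp (-(t / (2 * R ^ 2))) ^ (k + 1) := by
  have hbpos : 0 < 1 / R * Real.exp (-(t / (2 * R ^ 2))) ^ (k + 1) := by positivity
  unfold hkF
  split_ifs with hkN
  · rw [Real.norm_eq_abs, abs_mul, abs_mul, abs_mul]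
    have h1R : |1 / R| = 1 / R := abs_of_pos (by positivity)
    -- bound on the exponential factor
    set θ : ℝ := ((k:ℝ) + 1) * π / (2 * ((N:ℝ) + 1)) with hθdef
    have hN1 : (0:ℝ) < (N:ℝ) + 1 := by positivity
    have hθpos : 0 < θ := by
      have := Real.pi_pos; rw [hθdef]; positivity
    have hθle : θ ≤ π / 2 := by
      rw [hθdef, div_le_div_iff₀ (by positivity) two_pos]
      have hk1 : ((k:ℝ) + 1) ≤ (N:ℝ) + 1 := by
        have : (k:ℝ) ≤ (N:ℝ) := by exact_mod_cast hkN.le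
        linarith
      nlinarith [Real.pi_pos]
    have hsinθ : ((k:ℝ) + 1) / ((N:ℝ) + 1) ≤ Real.sin θ := by
      have := Real.mul_le_sin hθpos.le hθle
      calc ((k:ℝ) + 1) / ((N:ℝ) + 1) = 2 / π * θ := by
            rw [hθdef]; field_simp [Real.pi_ne_zero]
      _ ≤ Real.sin θ := this
    have hexparg : -2 * (t * ((N:ℝ) + 1) ^ 2 / (8 * R ^ 2))
        + t * ((N:ℝ) + 1) ^ 2 / (8 * R ^ 2) * (2 * Real.cos (((k:ℝ) + 1) * (π / ((N:ℝ) + 1))))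
        ≤ -(t / (2 * R ^ 2)) * ((k:ℝ) + 1) ^ 2 := by
      have hcos : Real.cos (((k:ℝ) + 1) * (π / ((N:ℝ) + 1))) = 1 - 2 * Real.sin θ ^ 2 := by
        have h2θ : ((k:ℝ) + 1) * (π / ((N:ℝ) + 1)) = 2 * θ := by
          rw [hθdef]; field_simp
        rw [h2θ]
        have := Real.sin_sq_eq_half_sub θ
        linarith
      rw [hcos]
      have hsq : (((k:ℝ) + 1) / ((N:ℝ) + 1)) ^ 2 ≤ Real.sin θ ^ 2 := by
        apply sq_le_sq'
        · have : (0:ℝ) < ((k:ℝ) + 1) / ((N:ℝ) + 1) := by positivity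
          nlinarith [Real.sin_pos_of_pos_of_lt_pi hθpos
            (lt_of_le_of_lt hθle (by linarith [Real.pi_pos]))]
        · exact hsinθ
      have hksq : ((k:ℝ) + 1) ^ 2 ≤ ((N:ℝ) + 1) ^ 2 * Real.sin θ ^ 2 := by
        have h2 : (((k:ℝ) + 1) / ((N:ℝ) + 1)) ^ 2 = ((k:ℝ) + 1) ^ 2 / ((N:ℝ) + 1) ^ 2 := by
          rw [div_pow]
        rw [h2] at hsq
        calc ((k:ℝ) + 1) ^ 2 = ((k:ℝ) + 1) ^ 2 / ((N:ℝ) + 1) ^ 2 * ((N:ℝ) + 1) ^ 2 := by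
              field_simp
        _ ≤ Real.sin θ ^ 2 * ((N:ℝ) + 1) ^ 2 := by
              apply mul_le_mul_of_nonneg_right hsq (by positivity)
        _ = ((N:ℝ) + 1) ^ 2 * Real.sin θ ^ 2 := by ring
      have ht2R : (0:ℝ) < t / (2 * R ^ 2) := by positivity
      calc -2 * (t * ((N:ℝ) + 1) ^ 2 / (8 * R ^ 2))
            + t * ((N:ℝ) + 1) ^ 2 / (8 * R ^ 2) * (2 * (1 - 2 * Real.sin θ ^ 2))
          = -(t / (2 * R ^ 2)) * (((N:ℝ) + 1) ^ 2 * Real.sin θ ^ 2) := by ring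
      _ ≤ -(t / (2 * R ^ 2)) * ((k:ℝ) + 1) ^ 2 := by nlinarith
    have hexp_le : Real.exp (-2 * (t * ((N:ℝ) + 1) ^ 2 / (8 * R ^ 2))
        + t * ((N:ℝ) + 1) ^ 2 / (8 * R ^ 2) * (2 * Real.cos (((k:ℝ) + 1) * (π / ((N:ℝ) + 1)))))
        ≤ Real.exp (-(t / (2 * R ^ 2))) ^ (k + 1) := by
      rw [← Real.exp_nat_mul]
      apply Real.exp_le_exp.mpr
      calc -2 * (t * ((N:ℝ) + 1) ^ 2 / (8 * R ^ 2))
            + t * ((N:ℝ) + 1) ^ 2 / (8 * R ^ 2) * (2 * Real.cos (((k:ℝ) + 1) * (π / ((N:ℝ) + 1))))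
          ≤ -(t / (2 * R ^ 2)) * ((k:ℝ) + 1) ^ 2 := hexparg
      _ ≤ ((k:ℕ) + 1 : ℕ) * -(t / (2 * R ^ 2)) := by
          push_cast
          have hc : 0 < t / (2 * R ^ 2) := by positivity
          have hk1 : (1:ℝ) ≤ (k:ℝ) + 1 := by
            have : (0:ℝ) ≤ (k:ℝ) := Nat.cast_nonneg k
            linarith
          nlinarith [mul_nonneg (mul_nonneg (sub_nonneg.mpr hk1)
            (by linarith : (0:ℝ) ≤ (k:ℝ) + 1)) hc.le]
    calc |1 / R| * |Real.sin _| * |Real.sin _| * |Real.exp _|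
        ≤ 1 / R * 1 * 1 * Real.exp (-(t / (2 * R ^ 2))) ^ (k + 1) := by
          apply mul_le_mul
          · apply mul_le_mul
            · apply mul_le_mul (le_of_eq h1R) (Real.abs_sin_le_one _) (abs_nonneg _)
                (by positivity)
            · exact Real.abs_sin_le_one _
            · exact abs_nonneg _
            · positivity
          · rw [abs_of_pos (Real.exp_pos _)]; exact hexp_le
          · exact abs_nonneg _
          · positivity
    _ = 1 / R * Real.exp (-(t / (2 * R ^ 2))) ^ (k + 1) := by ring
  · rw [norm_zero]; exact hbpos.le

lemma hkF_bound_summable (R t : ℝ) (hR : 0 < R) (ht : 0 < t) :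
    Summable (fun k : ℕ => 1 / R * Real.exp (-(t / (2 * R ^ 2))) ^ (k + 1)) := by
  have hgeo : Summable (fun k : ℕ => Real.exp (-(t / (2 * R ^ 2))) ^ k) :=
    summable_geometric_of_lt_one (by positivity)
      (Real.exp_lt_one_iff.mpr (neg_lt_zero.mpr (by positivity)))
  have h2 : Summable (fun k : ℕ => Real.exp (-(t / (2 * R ^ 2))) ^ (k + 1)) := by
    simpa only [pow_succ] using hgeo.mul_right _
  exact h2.mul_left _

lemma hkF_tendsto (R t a b : ℝ) (hR : 0 < R)
    (ha0 : 0 ≤ a) (ha1 : a ≤ 1) (hb0 : 0 ≤ b) (hb1 : b ≤ 1) (k : ℕ) :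
    Tendsto (fun N : ℕ => hkF R t a b N k) atTop
      (𝓝 (1 / R * Real.sin (((k:ℝ) + 1) * π * b) * Real.sin (((k:ℝ) + 1) * π * a)
        * Real.exp (-((((k:ℝ) + 1) * π) ^ 2 / (4 * R ^ 2)) * t / 2))) := by
  apply Tendsto.congr' (f₁ := fun N : ℕ =>
    1 / R * Real.sin ((((hkIdx b N : ℕ) : ℝ) + 1) * ((k:ℝ) + 1) * (π / ((N:ℝ) + 1)))
      * Real.sin ((((hkIdx a N : ℕ) : ℝ) + 1) * ((k:ℝ) + 1) * (π / ((N:ℝ) + 1)))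
      * Real.exp (-2 * (t * ((N:ℝ) + 1) ^ 2 / (8 * R ^ 2))
          + t * ((N:ℝ) + 1) ^ 2 / (8 * R ^ 2)
            * (2 * Real.cos (((k:ℝ) + 1) * (π / ((N:ℝ) + 1))))))
  · filter_upwards [eventually_gt_atTop k] with N hN
    unfold hkF
    rw [if_pos hN]
  · exact ((tendsto_const_nhds.mul (sin_factor_tendsto b hb0 hb1 k)).mul
      (sin_factor_tendsto a ha0 ha1 k)).mul
      ((Real.continuous_exp.tendsto _).comp (exp_arg_tendsto R t hR k))

lemma hkF_sum_nonneg (R t a b : ℝ) (hR : 0 < R) (ht : 0 ≤ t) (N : ℕ) :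
    0 ≤ ∑' k : ℕ, hkF R t a b N k := by
  rcases Nat.eq_zero_or_pos N with h0 | hN
  · subst h0
    simp [hkF]
  · rw [tsum_eq_sum (s := Finset.range N)
      (fun k hk => by unfold hkF; rw [if_neg (by simpa using hk)])]
    have hterm : ∀ k ∈ Finset.range N, hkF R t a b N k
        = 1 / R * (Real.sin ((((hkIdx b N : ℕ) : ℝ) + 1) * ((k:ℝ) + 1) * (π / ((N:ℝ) + 1)))
          * Real.sin ((((hkIdx a N : ℕ) : ℝ) + 1) * ((k:ℝ) + 1) * (π / ((N:ℝ) + 1)))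
          * Real.exp (-2 * (t * ((N:ℝ) + 1) ^ 2 / (8 * R ^ 2))
            + t * ((N:ℝ) + 1) ^ 2 / (8 * R ^ 2)
              * (2 * Real.cos (((k:ℝ) + 1) * (π / ((N:ℝ) + 1)))))) := by
      intro k hk
      unfold hkF
      rw [if_pos (Finset.mem_range.mp hk)]
      ring
    rw [Finset.sum_congr rfl hterm, ← Finset.mul_sum]
    apply mul_nonneg (by positivity)
    have := discrete_nonneg N (t * ((N:ℝ) + 1) ^ 2 / (8 * R ^ 2))
      (-2 * (t * ((N:ℝ) + 1) ^ 2 / (8 * R ^ 2)))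
      (by positivity)
      (⟨hkIdx b N, hkIdx_lt hN⟩ : Fin N) (⟨hkIdx a N, hkIdx_lt hN⟩ : Fin N)
    exact this.trans_eq (Fin.sum_univ_eq_sum_range (fun k : ℕ =>
      Real.sin ((((hkIdx b N : ℕ) : ℝ) + 1) * ((k:ℝ) + 1) * (π / ((N:ℝ) + 1)))
        * Real.sin ((((hkIdx a N : ℕ) : ℝ) + 1) * ((k:ℝ) + 1) * (π / ((N:ℝ) + 1)))
        * Real.exp (-2 * (t * ((N:ℝ) + 1) ^ 2 / (8 * R ^ 2))
          + t * ((N:ℝ) + 1) ^ 2 / (8 * R ^ 2)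
            * (2 * Real.cos (((k:ℝ) + 1) * (π / ((N:ℝ) + 1)))))) N)


/-- The Dirichlet heat kernel is nonnegative: for all `x, x' ∈ [-R, R]` and `t > 0`,
`f₁(x, t; x') ≥ 0`. -/
theorem f₁_nonneg (R : ℝ) (hR : 0 < R) (x x' : ℝ)
    (hx : x ∈ Set.Icc (-R) R) (hx' : x' ∈ Set.Icc (-R) R) (t : ℝ) (ht : 0 < t) :
    0 ≤ f₁ R x' x t := by
  obtain ⟨hx1, hx2⟩ := hx
  obtain ⟨hx'1, hx'2⟩ := hx'
  set a : ℝ := (x + R) / (2 * R) with ha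
  set b : ℝ := (x' + R) / (2 * R) with hb
  have h2R : (0:ℝ) < 2 * R := by linarith
  have ha0 : 0 ≤ a := div_nonneg (by linarith) h2R.le
  have ha1 : a ≤ 1 := by rw [ha, div_le_one h2R]; linarith
  have hb0 : 0 ≤ b := div_nonneg (by linarith) h2R.le
  have hb1 : b ≤ 1 := by rw [hb, div_le_one h2R]; linarith
  have hlim : Tendsto (fun N : ℕ => ∑' k : ℕ, hkF R t a b N k) atTop
      (𝓝 (∑' k : ℕ, 1 / R * Real.sin (((k:ℝ) + 1) * π * b) * Real.sin (((k:ℝ) + 1) * π * a)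
        * Real.exp (-((((k:ℝ) + 1) * π) ^ 2 / (4 * R ^ 2)) * t / 2))) :=
    tendsto_tsum_of_dominated_convergence (hkF_bound_summable R t hR ht)
      (fun k => hkF_tendsto R t a b hR ha0 ha1 hb0 hb1 k)
      (Eventually.of_forall fun N k => hkF_bound R t a b hR ht N k)
  have hf₁ : f₁ R x' x t = ∑' k : ℕ, 1 / R * Real.sin (((k:ℝ) + 1) * π * b)
      * Real.sin (((k:ℝ) + 1) * π * a)
      * Real.exp (-((((k:ℝ) + 1) * π) ^ 2 / (4 * R ^ 2)) * t / 2) := by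
    unfold f₁
    apply tsum_congr
    intro k
    rw [ha, hb, mul_div_assoc (((k:ℝ) + 1) * π) (x' + R) (2 * R),
      mul_div_assoc (((k:ℝ) + 1) * π) (x + R) (2 * R)]
  rw [hf₁]
  exact ge_of_tendsto hlim (Eventually.of_forall fun N => hkF_sum_nonneg R t a b hR ht.le N)
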